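/- There exists a constant C > 0 such that for all natural numbers n and all t > 0, (n/t)·s_n(t) ≤ C/(n+1)³, where s_n is as defined. -/

import Mathlib

lemma cube_le_exp {w : ℝ} (hw : 0 ≤ w) : (w/3)^3 ≤ Real.exp w := by
  have h := Real.add_one_le_exp (w/3)
  calc (w/3)^3 ≤ (w/3+1)^3 := by nlinarith [sq_nonneg (w/3)]
    _ ≤ (Real.exp (w/3))^3 := by
        apply pow_le_pow_left₀ (by positivity) h
    _ = Real.exp w := by
        rw [← Real.exp_nat_mul]; congr 1; push_cast; ring

lemma pade_log {x : ℝ} (hx : 1 ≤ x) : 2*(x-1)/(x+1) ≤ Real.log x := by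
  have hmono : MonotoneOn (fun y : ℝ => Real.log y + 4/(y+1)) (Set.Ici 1) := by
    apply monotoneOn_of_deriv_nonneg (convex_Ici 1)
    · apply ContinuousOn.add
      · exact Real.continuousOn_log.mono (by intro y hy; simp at hy ⊢; linarith)
      · apply ContinuousOn.div continuousOn_const (by fun_prop)
        intro y hy; simp at hy; intro h; linarith
    · apply DifferentiableOn.add
      · apply Real.differentiableOn_log.mono
        intro y hy; rw [interior_Ici] at hy; simp at hy ⊢; linarith
      · apply DifferentiableOn.div (differentiableOn_const _) (by fun_prop)
        intro y hy; rw [interior_Ici] at hy; simp at hy; intro h; linarith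
    · intro y hy
      rw [interior_Ici] at hy
      have hy1 : (1:ℝ) < y := hy
      have hy0 : y ≠ 0 := by linarith
      have hy1' : y + 1 ≠ 0 := by linarith
      have hd : HasDerivAt (fun y : ℝ => Real.log y + 4/(y+1))
          (y⁻¹ + (-1/(y+1)^2 * 4)) y := by
        have h1 : HasDerivAt Real.log y⁻¹ y := Real.hasDerivAt_log hy0
        have h2 : HasDerivAt (fun z : ℝ => z + 1) 1 y := (hasDerivAt_id y).add_const 1
        have h3 : HasDerivAt (fun z : ℝ => ((z+1):ℝ)⁻¹) (-1/(y+1)^2) y := by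
          exact h2.inv hy1'
        have h4 : HasDerivAt (fun z : ℝ => 4/(z+1)) (-1/(y+1)^2 * 4) y := by
          have := h3.mul_const (4:ℝ)
          simpa [div_eq_mul_inv, mul_comm] using this
        exact h1.add h4
      rw [hd.deriv]
      have : y⁻¹ + -1/(y+1)^2 * 4 = (y-1)^2 / (y * (y+1)^2) := by
        field_simp; ring
      rw [this]; positivity
  have h2 := hmono (Set.self_mem_Ici) (Set.mem_Ici.mpr hx) hx
  simp only [Real.log_one] at h2
  norm_num at h2
  have hx1 : (0:ℝ) < x + 1 := by linarith
  have h3 : 2*(x-1)/(x+1) = 2 - 4/(x+1) := by field_simp; ring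
  linarith [h2]

lemma key_ineq (n : ℕ) (t r : ℝ) (ht : 0 < t) (hm : (0:ℝ) < (n:ℝ)+1)
    (hr2 : r^2 = ((n:ℝ)+1)^2 + t^2) (hrt : t ≤ r) (hr0 : 0 ≤ r) :
    Real.exp (-t + r) * (t / ((n:ℝ)+1+r)) ^ (n+1) ≤ Real.exp (t - r) := by
  set m : ℝ := (n:ℝ)+1 with hmdef
  clear_value m
  set x : ℝ := (m + r) / t with hxdef
  have hx1 : 1 ≤ x := by rw [hxdef, le_div_iff₀ ht]; linarith
  have hx0 : 0 < x := by linarith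
  have hlog : 2 * (r - t) ≤ m * Real.log x := by
    have h1 := pade_log hx1
    have h2 : m * (2*(x-1)/(x+1)) = 2*(r-t) := by
      rw [hxdef]
      have hne : m + r + t ≠ 0 := by positivity
      field_simp
      nlinarith [hr2]
    calc 2*(r-t) = m * (2*(x-1)/(x+1)) := h2.symm
      _ ≤ m * Real.log x := mul_le_mul_of_nonneg_left h1 (by linarith)
  have hxpow : Real.exp (2*(r-t)) ≤ x ^ (n+1) := by
    have h3 : x ^ (n+1) = Real.exp ((m) * Real.log x) := by
      rw [← Real.rpow_natCast x (n+1), Real.rpow_def_of_pos hx0]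
      rw [hmdef]
      congr 1
      push_cast; ring
    rw [h3]
    exact Real.exp_le_exp.mpr (by linarith)
  have htx : t / (m + r) = x⁻¹ := by rw [hxdef, inv_div]
  have hEP : Real.exp (-t + r) * (t / (m+r)) ^ (n+1) = Real.exp (r - t) / x ^ (n+1) := by
    rw [htx, inv_pow, div_eq_mul_inv]
    congr 2
    ring
  rw [hEP, div_le_iff₀ (by positivity)]
  calc Real.exp (r-t) = Real.exp (t-r) * Real.exp (2*(r-t)) := by
        rw [← Real.exp_add]; congr 1; ring
    _ ≤ Real.exp (t-r) * x^(n+1) := mul_le_mul_of_nonneg_left hxpow (Real.exp_pos _).le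

lemma num2a (k : ℕ) : ((k:ℝ)+2)^3 * (Real.exp (2*((k:ℝ)+2)) * (1/16:ℝ)^k) ≤ 4000000 := by
  have hlog2 : (0.6931:ℝ) ≤ Real.log 2 := by
    have := Real.log_two_gt_d9; linarith
  have ha : (0:ℝ) ≤ (k:ℝ)+2 := by positivity
  have hc : ((k:ℝ)+2) = ((k+2:ℕ):ℝ) := by push_cast; ring
  have h2e : ((2:ℝ))^(k+2) = Real.exp (((k:ℝ)+2) * Real.log 2) := by
    rw [hc, Real.exp_nat_mul, Real.exp_log two_pos]
  have hcube := cube_le_exp (w := ((k:ℝ)+2) * Real.log 2) (by positivity)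
  rw [← h2e] at hcube
  have hmono : (((k:ℝ)+2) * 0.6931 / 3)^3 ≤ (((k:ℝ)+2) * Real.log 2 / 3)^3 := by
    apply pow_le_pow_left₀ (by positivity)
    apply div_le_div_of_nonneg_right ?_ (by norm_num)
    exact mul_le_mul_of_nonneg_left hlog2 ha
  have hq : (((k:ℝ)+2) * 0.6931 / 3)^3 = ((k:ℝ)+2)^3 * ((0.6931:ℝ)/3)^3 := by ring
  have hp : (0:ℝ) < 2^(k+2) := by positivity
  have h5 : ((k:ℝ)+2)^3 * ((0.6931:ℝ)/3)^3 ≤ 2^(k+2) := by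
    rw [← hq]; linarith [hmono, hcube]
  have hk3 : ((k:ℝ)+2)^3 ≤ 100 * 2^(k+2) := by nlinarith [h5, hp]
  have he1 := Real.exp_one_lt_d9
  have he2 : Real.exp 2 ≤ 8 := by
    have h2 : Real.exp 2 = (Real.exp 1)^2 := by
      rw [← Real.exp_nat_mul]; norm_num
    rw [h2]; nlinarith [Real.exp_pos 1]
  have hexp : Real.exp (2*((k:ℝ)+2)) = (Real.exp 2)^(k+2) := by
    rw [hc, mul_comm, Real.exp_nat_mul]
  have hexp8 : (Real.exp 2)^(k+2) ≤ 8^(k+2) :=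
    pow_le_pow_left₀ (Real.exp_pos 2).le he2 _
  have key : ((k:ℝ)+2)^3 * (Real.exp (2*((k:ℝ)+2)) * (1/16:ℝ)^k)
      ≤ (100 * 2^(k+2)) * (8^(k+2) * (1/16:ℝ)^k) := by
    rw [hexp]
    apply mul_le_mul hk3 ?_ (by positivity) (by positivity)
    exact mul_le_mul_of_nonneg_right hexp8 (by positivity)
  have h16 : (2:ℝ)^(k+2) * 8^(k+2) = 16^(k+2) := by rw [← mul_pow]; norm_num
  have h161 : (16:ℝ)^k * (1/16:ℝ)^k = 1 := by rw [← mul_pow]; norm_num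
  have hid : (100 * (2:ℝ)^(k+2)) * (8^(k+2) * (1/16:ℝ)^k) = 25600 := by
    calc (100 * (2:ℝ)^(k+2)) * (8^(k+2) * (1/16)^k)
        = 100 * ((2^(k+2) * 8^(k+2)) * (1/16)^k) := by ring
      _ = 100 * (16^(k+2) * (1/16)^k) := by rw [h16]
      _ = 100 * ((16^k * (1/16)^k) * 256) := by rw [pow_add]; ring_nf
      _ = 25600 := by rw [h161]; norm_num
  rw [hid] at key
  linarith

lemma r1bound (m t : ℝ) (hm1 : 1 ≤ m) (ht : 0 < t) :
    m^5 * Real.exp (-(m^2/(3*t))) ≤ 730 * (t^2 * Real.sqrt t) := by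
  have hm0 : (0:ℝ) < m := by linarith
  set s : ℝ := Real.sqrt t with hsdef
  have hs0 : 0 < s := Real.sqrt_pos.mpr ht
  have hs2 : s^2 = t := Real.sq_sqrt ht.le
  have hw : (0:ℝ) ≤ m^2/(3*t) := by positivity
  have hexp1 : Real.exp (-(m^2/(3*t))) ≤ 1 := Real.exp_le_one_iff.mpr (by linarith)
  rcases le_total m s with h | h
  · calc m^5 * Real.exp (-(m^2/(3*t))) ≤ m^5 * 1 :=
          mul_le_mul_of_nonneg_left hexp1 (by positivity)
      _ = m^5 := by ring
      _ ≤ s^5 := pow_le_pow_left₀ (by linarith) h 5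
      _ = t^2 * s := by rw [← hs2]; ring
      _ ≤ 730 * (t^2 * s) := by nlinarith [sq_nonneg t]
  · have hcube := cube_le_exp hw
    have hq : (m^2/(3*t)/3)^3 = m^6/(729*t^3) := by
      field_simp; ring
    rw [hq] at hcube
    have hinv : Real.exp (-(m^2/(3*t))) ≤ 729*t^3/m^6 := by
      rw [Real.exp_neg]
      rw [inv_le_comm₀ (Real.exp_pos _) (by positivity), inv_div]
      exact hcube
    calc m^5 * Real.exp (-(m^2/(3*t))) ≤ m^5 * (729*t^3/m^6) :=
          mul_le_mul_of_nonneg_left hinv (by positivity)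
      _ = 729*t^3/m := by field_simp
      _ ≤ 730 * (t^2 * s) := by
          rw [div_le_iff₀ hm0]
          have key : t^2 * s * s ≤ t^2 * s * m :=
            mul_le_mul_of_nonneg_left h (by positivity)
          have h3 : t^2 * s * s = t^3 := by rw [← hs2]; ring
          nlinarith [key, h3, pow_pos ht 3]

lemma num2b (m v : ℝ) (hm1 : 1 ≤ m) (hv : v ≤ -(m/3)) : m^3 * Real.exp v ≤ 729 := by
  have hcube := cube_le_exp (w := m/3) (by linarith)
  have hq : (m/3/3)^3 = m^3/729 := by ring
  rw [hq] at hcube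
  have h1 : Real.exp v ≤ Real.exp (-(m/3)) := Real.exp_le_exp.mpr hv
  have h2 : Real.exp (-(m/3)) = (Real.exp (m/3))⁻¹ := Real.exp_neg _
  have h3 : (Real.exp (m/3))⁻¹ ≤ (m^3/729)⁻¹ := by
    apply inv_anti₀ (by positivity) hcube
  have h4 : (m^3/729)⁻¹ = 729/m^3 := by rw [inv_div]
  have h5 : m^3 * Real.exp v ≤ m^3 * (729/m^3) := by
    apply mul_le_mul_of_nonneg_left ?_ (by positivity)
    rw [h2] at h1; rw [h4] at h3; linarith
  calc m^3 * Real.exp v ≤ m^3 * (729/m^3) := h5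
    _ = 729 := by field_simp

set_option maxHeartbeats 2000000 in
theorem sn_derivative_type_bound :
    ∃ C : ℝ, 0 < C ∧ ∀ (n : ℕ) (t : ℝ), 0 < t →
      ((n : ℝ) / t) *
          (((n : ℝ) + 1) * Real.exp (-t + Real.sqrt (((n : ℝ) + 1) ^ 2 + t ^ 2)) *
            (t / ((n : ℝ) + 1 + Real.sqrt (((n : ℝ) + 1) ^ 2 + t ^ 2))) ^ (n + 1) /
            (t * (1 + ((n : ℝ) + 1) ^ 2 + t ^ 2) ^ ((1 : ℝ) / 4)))
        ≤ C / ((n : ℝ) + 1) ^ 3 := by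
  refine ⟨1000000, by norm_num, ?_⟩
  intro n t ht
  rcases Nat.eq_zero_or_pos n with hn | hn
  · subst hn
    norm_num
  -- n ≥ 1
  obtain ⟨k, rfl⟩ : ∃ k, n = k + 1 := ⟨n - 1, by omega⟩
  set n' : ℕ := k + 1 with hn'def
  set m : ℝ := (n':ℝ) + 1 with hmdef
  have hn0 : (1:ℝ) ≤ (n':ℝ) := by exact_mod_cast hn
  have hm1 : (2:ℝ) ≤ m := by rw [hmdef]; linarith
  have hm0 : (0:ℝ) < m := by linarith
  set r : ℝ := Real.sqrt (m^2 + t^2) with hrdef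
  have hr2 : r^2 = m^2 + t^2 := Real.sq_sqrt (by positivity)
  have hr0 : 0 ≤ r := Real.sqrt_nonneg _
  have hrm : m ≤ r := by nlinarith [hr2, sq_nonneg (r - m), sq_nonneg t]
  have hrt : t ≤ r := by nlinarith [hr2, sq_nonneg (r - t)]
  have hrmt : r ≤ m + t := by nlinarith [hr2, sq_nonneg (r - m - t)]
  set B : ℝ := (1 + m^2 + t^2) ^ ((1:ℝ)/4) with hBdef
  have hB1 : (1:ℝ) ≤ B := by
    apply Real.one_le_rpow (by nlinarith) (by norm_num)
  have hB0 : (0:ℝ) < B := by linarith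
  have hBt : Real.sqrt t ≤ B := by
    have h2 : (Real.sqrt t)^(4:ℕ) = t^2 := by
      have := Real.sq_sqrt ht.le
      nlinarith [this]
    have h1 : Real.sqrt t = (t^2) ^ ((1:ℝ)/4) := by
      rw [← h2, ← Real.rpow_natCast (Real.sqrt t) 4, ← Real.rpow_mul (Real.sqrt_nonneg t)]
      norm_num
    rw [h1]
    exact Real.rpow_le_rpow (by positivity) (by nlinarith) (by norm_num)
  set E : ℝ := Real.exp (-t + r) with hEdef
  set P : ℝ := (t / (m + r)) ^ (n' + 1) with hPdef
  have hkey : E * P ≤ Real.exp (t - r) := by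
    rw [hEdef, hPdef]
    exact key_ineq n' t r ht (by rw [← hmdef]; positivity) (by rw [← hmdef]; exact hr2)
      hrt hr0
  clear_value B
  clear_value E P r m
  have hmr0 : 0 < m + r := by linarith
  have hbase0 : 0 ≤ t / (m + r) := by positivity
  have hE0 : 0 < E := by rw [hEdef]; exact Real.exp_pos _
  have hP0 : 0 ≤ P := by rw [hPdef]; positivity
  have hdiff : r - t = m^2 / (r + t) := by
    rw [eq_div_iff (by positivity : r + t ≠ 0)]
    nlinarith [hr2]
  have hgoal : ((n':ℝ) / t) * (m * E * P / (t * B)) = (n':ℝ) * (m * E * P) / (t * (t * B)) := by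
    ring
  rw [hgoal, div_le_div_iff₀ (by positivity) (by positivity)]
  have hnm : (n':ℝ) ≤ m := by rw [hmdef]; linarith
  rcases le_total m t with hreg | hreg
  -- Region 1 : m ≤ t
  · have hrt3 : r + t ≤ 3*t := by linarith
    have hsub : t - r ≤ -(m^2/(3*t)) := by
      have h1 : m^2/(3*t) ≤ m^2/(r+t) := by
        rw [div_le_div_iff₀ (by positivity) (by positivity)]
        nlinarith [sq_nonneg m]
      linarith [hdiff]
    calc (n':ℝ) * (m * E * P) * m^3
        = (n':ℝ) * m^3 * (m * (E*P)) := by ring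
      _ ≤ m * m^3 * (m * Real.exp (t - r)) := by
          apply mul_le_mul
          · exact mul_le_mul_of_nonneg_right hnm (by positivity)
          · exact mul_le_mul_of_nonneg_left hkey (by positivity)
          · positivity
          · positivity
      _ = m^5 * Real.exp (t - r) := by ring
      _ ≤ m^5 * Real.exp (-(m^2/(3*t))) := by
          apply mul_le_mul_of_nonneg_left (Real.exp_le_exp.mpr hsub) (by positivity)
      _ ≤ 730 * (t^2 * Real.sqrt t) := r1bound m t (by linarith) ht
      _ ≤ 1000000 * (t * (t * B)) := by
          have h1 : t^2 * Real.sqrt t ≤ t^2 * B :=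
            mul_le_mul_of_nonneg_left hBt (by positivity)
          nlinarith [Real.sqrt_nonneg t, sq_nonneg t, ht, hB0]
  -- Region 2 : t ≤ m
  · have hPQ : P = (t/(m+r))^k * (t/(m+r))^2 := by
      rw [hPdef, ← pow_add]
    set Q : ℝ := (t/(m+r))^k with hQdef
    have hQ0 : 0 ≤ Q := by rw [hQdef]; positivity
    have hr2m : r ≤ 2*m := by linarith
    have hEQ : m^3 * (E * Q) ≤ 4000000 := by
      rcases le_total t (m/8) with hsm | hsm
      -- 2a : t ≤ m/8
      · have hEb : E ≤ Real.exp (2*m) := by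
          rw [hEdef]
          apply Real.exp_le_exp.mpr
          linarith
        have hqb : t/(m+r) ≤ 1/16 := by
          rw [div_le_div_iff₀ hmr0 (by norm_num)]
          linarith
        have hQb : Q ≤ (1/16:ℝ)^k := by
          rw [hQdef]
          exact pow_le_pow_left₀ hbase0 hqb k
        have hm2 : m = (k:ℝ) + 2 := by
          rw [hmdef, hn'def]; push_cast; ring
        calc m^3 * (E * Q) ≤ m^3 * (Real.exp (2*m) * (1/16:ℝ)^k) := by
              apply mul_le_mul_of_nonneg_left ?_ (by positivity)
              apply mul_le_mul hEb hQb hQ0 (Real.exp_pos _).le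
          _ ≤ 4000000 := by rw [hm2]; exact num2a k
      -- 2b : m/8 ≤ t
      · have hlb : (1/24:ℝ) ≤ t/(m+r) := by
          rw [le_div_iff₀ hmr0]
          linarith
        have hPb : m^3 * (E * P) ≤ 729 := by
          have hsub : t - r ≤ -(m/3) := by
            have h1 : m/3 ≤ m^2/(r+t) := by
              rw [div_le_div_iff₀ (by norm_num) (by positivity)]
              nlinarith
            linarith [hdiff]
          calc m^3 * (E * P) ≤ m^3 * Real.exp (t - r) :=
                mul_le_mul_of_nonneg_left hkey (by positivity)
            _ ≤ 729 := num2b m (t-r) (by linarith) hsub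
        have hsq : (1/24:ℝ)^2 ≤ (t/(m+r))^2 := pow_le_pow_left₀ (by norm_num) hlb 2
        have hEQP : m^3 * (E * Q) * (t/(m+r))^2 = m^3 * (E * P) := by
          rw [hPQ]; ring
        nlinarith [hEQP, hPb, hsq, mul_pos (mul_pos (by positivity : (0:ℝ) < m^3) hE0) (lt_of_lt_of_le (by norm_num : (0:ℝ) < 1/24) hlb), hQ0, hE0, hm0]
    have hb2 : (t/(m+r))^2 ≤ t^2/(4*m^2) := by
      have h1 : t/(m+r) ≤ t/(2*m) := by
        rw [div_le_div_iff₀ hmr0 (by positivity)]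
        nlinarith
      calc (t/(m+r))^2 ≤ (t/(2*m))^2 := pow_le_pow_left₀ hbase0 h1 2
        _ = t^2/(4*m^2) := by rw [div_pow]; ring_nf
    have hEQnn : (0:ℝ) ≤ E * Q := mul_nonneg hE0.le hQ0
    calc (n':ℝ) * (m * E * P) * m^3
        = ((n':ℝ) * m^4) * ((E*Q) * (t/(m+r))^2) := by rw [hPQ]; ring
      _ ≤ (m * m^4) * ((E*Q) * (t^2/(4*m^2))) := by
          apply mul_le_mul
          · exact mul_le_mul_of_nonneg_right hnm (by positivity)
          · exact mul_le_mul_of_nonneg_left hb2 hEQnn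
          · exact mul_nonneg hEQnn (by positivity)
          · positivity
      _ = (m^3 * (E*Q)) * (t^2/4) := by field_simp
      _ ≤ 4000000 * (t^2/4) := mul_le_mul_of_nonneg_right hEQ (by positivity)
      _ = 1000000 * t^2 := by ring
      _ ≤ 1000000 * (t * (t * B)) := by
          have h2 : t*t ≤ t*t*B := by nlinarith [mul_pos ht ht]
          nlinarith [h2]
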